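/- For every nonzero h ∈ ℝ^L with ⟨h,a⟩ ≠ 0, the function λ ↦ P^KKT_h(λ) is strictly decreasing on (0,∞): if 0 < λ₁ < λ₂ then P^KKT_h(λ₁) > P^KKT_h(λ₂). -/

import Mathlib

open scoped BigOperators Classical
open Finset

noncomputable section

/-- Euclidean inner product on `Fin L → ℝ`. -/
def ip {L : ℕ} (x y : Fin L → ℝ) : ℝ := ∑ i, x i * y i

/-- Squared Euclidean norm on `Fin L → ℝ`. -/
def nsq {L : ℕ} (x : Fin L → ℝ) : ℝ := ∑ i, (x i) ^ 2

/-- ε(h) = ‖h‖²‖a‖² − ⟨h,a⟩². -/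
def eps {L : ℕ} (a h : Fin L → ℝ) : ℝ := nsq h * nsq a - (ip h a) ^ 2

/-- Symmetric-policy computation rate R_h(P). -/
def Rsym {L : ℕ} (a h : Fin L → ℝ) (P : ℝ) : ℝ :=
  (1 / 2) * Real.logb 2 ((1 + P * nsq h) / (nsq a + P * eps a h))

/-- The vector √p∘h with entries √(p_l)·h_l. -/
def sqp {L : ℕ} (p h : Fin L → ℝ) : Fin L → ℝ := fun l => Real.sqrt (p l) * h l

/-- Asymmetric-policy computation rate R(h,p). -/
def Rasym {L : ℕ} (a h p : Fin L → ℝ) : ℝ :=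
  (1 / 2) * Real.logb 2 ((1 + nsq (sqp p h)) /
    (nsq a + (nsq (sqp p h) * nsq a - (ip (sqp p h) a) ^ 2)))

/-- The KKT water-filling-type solution P^KKT_h(λ). -/
def PKKT {L : ℕ} (a h : Fin L → ℝ) (lam : ℝ) : ℝ :=
  if ∃ t : ℝ, h = t • a then 1 / lam - 1 / nsq h
  else (-(2 * nsq h * nsq a - (ip h a) ^ 2) +
      Real.sqrt ((2 * nsq h * nsq a - (ip h a) ^ 2) ^ 2 -
        4 * (nsq h * eps a h) * (nsq a - (ip h a) ^ 2 / lam))) /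
    (2 * (nsq h * eps a h))


lemma nsq_nonneg {L : ℕ} (x : Fin L → ℝ) : 0 ≤ nsq x :=
  Finset.sum_nonneg fun i _ => sq_nonneg _

lemma nsq_pos {L : ℕ} {x : Fin L → ℝ} (hx : x ≠ 0) : 0 < nsq x := by
  obtain ⟨i, hi⟩ := Function.ne_iff.mp hx
  refine Finset.sum_pos' (fun j _ => sq_nonneg _) ⟨i, Finset.mem_univ i, ?_⟩
  exact pow_pos (abs_pos.mpr hi) 2 |>.trans_eq (sq_abs _)

lemma nsq_eq_zero {L : ℕ} {x : Fin L → ℝ} (hx : nsq x = 0) : x = 0 := by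
  funext i
  have := (Finset.sum_eq_zero_iff_of_nonneg (fun j _ => sq_nonneg (x j))).mp hx i
    (Finset.mem_univ i)
  exact pow_eq_zero_iff (n := 2) (by norm_num) |>.mp this

lemma nsq_comb {L : ℕ} (a h : Fin L → ℝ) (A c : ℝ) :
    nsq (fun i => A * h i - c * a i)
      = A ^ 2 * nsq h - 2 * A * c * ip h a + c ^ 2 * nsq a := by
  simp only [nsq, ip, Finset.mul_sum, ← Finset.sum_sub_distrib, ← Finset.sum_add_distrib]
  exact Finset.sum_congr rfl fun i _ => by ring

lemma eps_pos {L : ℕ} {a h : Fin L → ℝ} (ha : a ≠ 0)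
    (hc : ¬ ∃ t : ℝ, h = t • a) : 0 < eps a h := by
  have A0 : 0 < nsq a := nsq_pos ha
  have key : nsq (fun i => nsq a * h i - ip h a * a i) = nsq a * eps a h := by
    rw [nsq_comb]; unfold eps; ring
  have hnn : 0 ≤ nsq a * eps a h := key ▸ nsq_nonneg _
  have heps : 0 ≤ eps a h := nonneg_of_mul_nonneg_right hnn A0
  rcases heps.lt_or_eq with h1 | h1
  · exact h1
  · exfalso
    apply hc
    refine ⟨ip h a / nsq a, ?_⟩
    have hz : nsq (fun i => nsq a * h i - ip h a * a i) = 0 := by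
      rw [key, ← h1, mul_zero]
    have := nsq_eq_zero hz
    funext i
    have hi := congrFun this i
    simp only [Pi.zero_apply] at hi
    have : nsq a * h i = ip h a * a i := by linarith
    rw [Pi.smul_apply, smul_eq_mul, div_mul_eq_mul_div, eq_div_iff A0.ne']
    linarith

/-- for nonzero h with ⟨h,a⟩ ≠ 0, λ ↦ P^KKT_h(λ) is strictly decreasing
on (0,∞). -/
theorem stmt11 {L : ℕ} (hL : 1 ≤ L)
    (a : Fin L → ℝ) (ha : a ≠ 0) (haint : ∀ i, ∃ n : ℤ, a i = (n : ℝ))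
    (h : Fin L → ℝ) (hh : h ≠ 0) (hha : ip h a ≠ 0) :
    ∀ lam₁ lam₂ : ℝ, 0 < lam₁ → lam₁ < lam₂ → PKKT a h lam₂ < PKKT a h lam₁ := by
  intro lam₁ lam₂ hl1 hlt
  have hl2 : 0 < lam₂ := hl1.trans hlt
  have H0 : 0 < nsq h := nsq_pos hh
  have A0 : 0 < nsq a := nsq_pos ha
  by_cases hc : ∃ t : ℝ, h = t • a
  · simp only [PKKT, if_pos hc]
    have := one_div_lt_one_div_of_lt hl1 hlt
    linarith
  · simp only [PKKT, if_neg hc]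
    have heps : 0 < eps a h := eps_pos ha hc
    have hd : 0 < nsq h * eps a h := mul_pos H0 heps
    have hs : 0 < (ip h a) ^ 2 := pow_pos (abs_pos.mpr hha) 2 |>.trans_eq (sq_abs _)
    have hfrac : (ip h a) ^ 2 / lam₂ < (ip h a) ^ 2 / lam₁ :=
      div_lt_div_of_pos_left hs hl1 hlt
    have hkey : (2 * nsq h * nsq a - (ip h a) ^ 2) ^ 2
        - 4 * (nsq h * eps a h) * nsq a = ((ip h a) ^ 2) ^ 2 := by
      unfold eps; ring
    have hD2 : 0 ≤ (2 * nsq h * nsq a - (ip h a) ^ 2) ^ 2 -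
        4 * (nsq h * eps a h) * (nsq a - (ip h a) ^ 2 / lam₂) := by
      have h1 : 0 < (ip h a) ^ 2 / lam₂ := div_pos hs hl2
      nlinarith [sq_nonneg ((ip h a)^2)]
    have hDlt : (2 * nsq h * nsq a - (ip h a) ^ 2) ^ 2 -
        4 * (nsq h * eps a h) * (nsq a - (ip h a) ^ 2 / lam₂) <
        (2 * nsq h * nsq a - (ip h a) ^ 2) ^ 2 -
        4 * (nsq h * eps a h) * (nsq a - (ip h a) ^ 2 / lam₁) := by
      nlinarith
    have hsqrt := Real.sqrt_lt_sqrt hD2 hDlt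
    have hden : 0 < 2 * (nsq h * eps a h) := by linarith
    exact div_lt_div_of_pos_right (by linarith) hden
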